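/- Let {T_i}_{i∈I} be a (C,C')-controlled K-operator frame with bounds A, B, and let Q ∈ End_A*(H) be invertible with adjointable inverse such that Q^{-1} commutes with K* and Q commutes with C and C'. Then {T_i Q}_{i∈I} is a (C,C')-controlled K-operator frame with bounds A‖Q^{-1}‖^{-2} and B‖Q‖². -/

import Mathlib

set_option linter.unusedSectionVars false
set_option linter.unusedVariables false
set_option synthInstance.maxHeartbeats 1000000
set_option maxHeartbeats 1000000


open scoped RightActions

/-- The Hilbert C⋆-module class as Mathlib defined it in December 2024 (right `A`-action via
`Aᵐᵒᵖ`); Mathlib's `CStarModule` now uses a left action with different axioms. -/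
class CStarModuleRight (A E : Type*) [NonUnitalSemiring A] [StarRing A] [Module ℂ A]
    [AddCommGroup E] [Module ℂ E] [PartialOrder A] [SMul Aᵐᵒᵖ E] [Norm A] [Norm E]
    extends Inner A E where
  inner_add_right {x} {y} {z} : inner x (y + z) = inner x y + inner x z
  inner_self_nonneg {x} : 0 ≤ inner x x
  inner_self {x} : inner x x = 0 ↔ x = 0
  inner_op_smul_right {a : A} {x y : E} : inner x (y <• a) = inner x y * a
  inner_smul_right_complex {z : ℂ} {x} {y} : inner x (z • y) = z • inner x y
  star_inner x y : star (inner x y) = inner y x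
  norm_eq_sqrt_norm_inner_self x : ‖x‖ = √‖inner x x‖

variable {A : Type*} [CStarAlgebra A] [PartialOrder A] [StarOrderedRing A]
variable {H : Type*} [NormedAddCommGroup H] [NormedSpace ℂ H] [CompleteSpace H]
  [SMul Aᵐᵒᵖ H] [CStarModuleRight A H]

/-- `S` is the adjoint of `T` with respect to the `A`-valued inner product. -/
def IsAdjointOf (T S : H →L[ℂ] H) : Prop :=
  ∀ x y : H, (inner A (T x) y : A) = inner A x (S y)

/-- `C` belongs to `GL⁺(H)` : invertible (with adjointable inverse), self-adjoint
and positive with respect to the `A`-valued inner product. -/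
def MemGLPlus (C : H →L[ℂ] H) : Prop :=
  (∃ Ci : H →L[ℂ] H, Ci.comp C = ContinuousLinearMap.id ℂ H ∧
      C.comp Ci = ContinuousLinearMap.id ℂ H) ∧
  (∀ x y : H, (inner A (C x) y : A) = inner A x (C y)) ∧
  (∀ x : H, (0 : A) ≤ inner A x (C x))

namespace CStarModuleRight

theorem inner_zero_left {x : H} : inner A (0 : H) x = 0 := by
  have h : inner A x (0 : H) = 0 := by
    have := inner_add_right (A := A) (x := x) (y := (0 : H)) (z := 0)
    rw [add_zero] at this
    exact add_eq_left.mp this.symm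
  rw [← star_inner x (0 : H), h, star_zero]

theorem inner_neg_right {x y : H} : inner A x (-y) = -inner A x y := by
  have h := inner_smul_right_complex (A := A) (z := (-1 : ℂ)) (x := x) (y := y)
  simpa using h

theorem inner_sub_right {x y z : H} : inner A x (y - z) = inner A x y - inner A x z := by
  rw [sub_eq_add_neg, inner_add_right, inner_neg_right, ← sub_eq_add_neg]

theorem inner_add_left {x y z : H} : inner A (x + y) z = inner A x z + inner A y z := by
  rw [← star_inner z (x + y), inner_add_right, star_add, star_inner, star_inner]

theorem inner_sub_left {x y z : H} : inner A (x - y) z = inner A x z - inner A y z := by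
  rw [← star_inner z (x - y), inner_sub_right, star_sub, star_inner, star_inner]

theorem inner_smul_left_complex {c : ℂ} {x y : H} :
    inner A (c • x) y = star c • inner A x y := by
  rw [← star_inner y (c • x), inner_smul_right_complex, star_smul, star_inner]

theorem inner_op_smul_left {a : A} {x y : H} : inner A (x <• a) y = star a * inner A x y := by
  rw [← star_inner y (x <• a), inner_op_smul_right, star_mul, star_inner]

theorem inner_smul_right_real {t : ℝ} {x y : H} : inner A x (t • y) = t • inner A x y := by
  have h₁ : t • y = (t : ℂ) • y := by simp
  rw [h₁, inner_smul_right_complex]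
  simp

theorem inner_smul_left_real {t : ℝ} {x y : H} : inner A (t • x) y = t • inner A x y := by
  have h₁ : t • x = (t : ℂ) • x := by simp
  rw [h₁, inner_smul_left_complex]
  simp

theorem norm_sq_eq {x : H} : ‖x‖ ^ 2 = ‖inner A x x‖ := by
  rw [norm_eq_sqrt_norm_inner_self (A := A) x, Real.sq_sqrt (norm_nonneg _)]

theorem inner_mul_inner_swap_le {x y : H} :
    inner A y x * inner A x y ≤ ‖x‖ ^ 2 • inner A y y := by
  rcases eq_or_ne x 0 with h | h
  · subst h
    rw [inner_zero_left, ← star_inner (0 : H) y, inner_zero_left]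
    simp
  · set t : ℝ := ‖x‖ ^ 2 with ht_def
    have ht : 0 < t := by positivity
    set a : A := inner A x y with ha
    have hsa : star a = inner A y x := star_inner x y
    have key : (0 : A) ≤ t • (t • inner A y y - inner A y x * inner A x y) := by
      calc (0 : A) ≤ inner A (x <• a - t • y) (x <• a - t • y) := inner_self_nonneg
        _ = star a * inner A x x * a - t • (star a * inner A x y) - t • (inner A y x * a)
              + t • (t • inner A y y) := by
            simp only [inner_sub_right, inner_op_smul_right, inner_sub_left,
              inner_op_smul_left, inner_smul_left_real, sub_mul, smul_mul_assoc,
              inner_smul_right_real, smul_sub, mul_assoc]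
            abel
        _ ≤ t • (star a * a) - t • (star a * inner A x y) - t • (inner A y x * a)
              + t • (t • inner A y y) := by
            gcongr
            calc _ ≤ ‖inner A x x‖ • (star a * a) :=
                CStarAlgebra.star_left_conjugate_le_norm_smul (hb := star_inner x x)
              _ = t • (star a * a) := by rw [ht_def, norm_sq_eq (A := A)]
        _ = t • (t • inner A y y - inner A y x * inner A x y) := by
            rw [hsa, ← ha, smul_sub]
            abel
    have := smul_nonneg (inv_nonneg.mpr ht.le) key
    rw [smul_smul, inv_mul_cancel₀ ht.ne', one_smul] at this
    exact sub_nonneg.mp this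

variable (H) in
theorem norm_inner_le {x y : H} : ‖inner A x y‖ ≤ ‖x‖ * ‖y‖ := by
  have := calc ‖inner A x y‖ ^ 2 = ‖inner A y x * inner A x y‖ := by
                rw [← star_inner x y, CStarRing.norm_star_mul_self, pow_two]
    _ ≤ ‖‖x‖ ^ 2 • inner A y y‖ := by
                refine CStarAlgebra.norm_le_norm_of_nonneg_of_le ?_ inner_mul_inner_swap_le
                rw [← star_inner x y]
                exact star_mul_self_nonneg _
    _ = ‖x‖ ^ 2 * ‖inner A y y‖ := by
                rw [norm_smul, Real.norm_of_nonneg (by positivity)]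
    _ = ‖x‖ ^ 2 * ‖y‖ ^ 2 := by rw [norm_sq_eq (A := A) (x := y)]
    _ = (‖x‖ * ‖y‖) ^ 2 := by rw [mul_pow]
  exact (pow_le_pow_iff_left₀ (norm_nonneg _) (by positivity) (by norm_num)).mp this

/-- The `A`-valued inner product as a sesquilinear map. -/
noncomputable def innerSesq : H →ₗ⋆[ℂ] H →ₗ[ℂ] A where
  toFun x := { toFun := fun y => inner A x y
               map_add' := fun z y => inner_add_right
               map_smul' := fun z y => by rw [inner_smul_right_complex]; rfl }
  map_add' z y := by ext; simp [inner_add_left]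
  map_smul' z y := by ext; simp [inner_smul_left_complex]

/-- The `A`-valued inner product as a continuous sesquilinear map. -/
noncomputable def innerSLR : H →L⋆[ℂ] H →L[ℂ] A :=
  LinearMap.mkContinuous₂ (innerSesq (A := A) (H := H)) 1 <| fun x y => by
    simpa [innerSesq] using norm_inner_le (A := A) H (x := x) (y := y)

theorem continuous_inner : Continuous (fun x : H × H => inner A x.1 x.2) := by
  have : (fun x : H × H => inner A x.1 x.2) = fun x => innerSLR (A := A) x.1 x.2 := rfl
  rw [this]
  fun_prop

end CStarModuleRight

namespace Stmt8Aux

open CStarModuleRight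

theorem ext_inner_left {x y : H} (h : ∀ z : H, (inner A z x : A) = inner A z y) : x = y := by
  have h2 : (inner A (x - y) (x - y) : A) = 0 := by
    rw [CStarModuleRight.inner_sub_right, h (x - y), sub_self]
  rw [← sub_eq_zero]
  exact CStarModuleRight.inner_self.mp h2

theorem _root_.IsAdjointOf.symm {f g : H →L[ℂ] H} (h : IsAdjointOf (A := A) f g) :
    IsAdjointOf (A := A) g f := by
  intro x y
  have := congrArg star (h y x)
  simpa only [star_inner] using this.symm

theorem _root_.IsAdjointOf.unique {f g g' : H →L[ℂ] H} (h : IsAdjointOf (A := A) f g)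
    (h' : IsAdjointOf (A := A) f g') : g = g' := by
  ext y
  exact ext_inner_left (A := A) fun z => by rw [← h z y, h' z y]

theorem _root_.IsAdjointOf.norm_le {f g : H →L[ℂ] H} (h : IsAdjointOf (A := A) f g) : ‖g‖ ≤ ‖f‖ := by
  refine ContinuousLinearMap.opNorm_le_bound _ (norm_nonneg f) fun y => ?_
  rcases eq_or_lt_of_le (norm_nonneg (g y)) with h0 | h0
  · rw [← h0]; positivity
  · have key : ‖g y‖ * ‖g y‖ ≤ (‖f‖ * ‖y‖) * ‖g y‖ := by
      have h1 : ‖g y‖ * ‖g y‖ = ‖(inner A (g y) (g y) : A)‖ := by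
        rw [← CStarModuleRight.norm_sq_eq]; ring
      have h2 : (inner A (g y) (g y) : A) = inner A (f (g y)) y := (h (g y) y).symm
      calc ‖g y‖ * ‖g y‖ = ‖(inner A (f (g y)) y : A)‖ := by rw [h1, h2]
        _ ≤ ‖f (g y)‖ * ‖y‖ := CStarModuleRight.norm_inner_le H
        _ ≤ (‖f‖ * ‖g y‖) * ‖y‖ := by
            have := f.le_opNorm (g y)
            nlinarith [norm_nonneg y]
        _ = (‖f‖ * ‖y‖) * ‖g y‖ := by ring
    exact le_of_mul_le_mul_right key h0

variable (A H) in
/-- The subalgebra of adjointable continuous linear maps. -/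
def adjointables : Subalgebra ℂ (H →L[ℂ] H) where
  carrier := {f | ∃ g, IsAdjointOf (A := A) f g}
  add_mem' := by
    rintro f₁ f₂ ⟨g₁, h₁⟩ ⟨g₂, h₂⟩
    exact ⟨g₁ + g₂, fun x y => by
      simp only [ContinuousLinearMap.add_apply, CStarModuleRight.inner_add_left,
        CStarModuleRight.inner_add_right, h₁ x y, h₂ x y]⟩
  mul_mem' := by
    rintro f₁ f₂ ⟨g₁, h₁⟩ ⟨g₂, h₂⟩
    exact ⟨g₂ * g₁, fun x y => by
      simp only [ContinuousLinearMap.mul_apply, h₁ _ y, h₂ _ _]⟩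
  algebraMap_mem' := fun c => by
    refine ⟨algebraMap ℂ _ (starRingEnd ℂ c), fun x y => ?_⟩
    simp only [Algebra.algebraMap_eq_smul_one, ContinuousLinearMap.smul_apply,
      ContinuousLinearMap.one_apply, CStarModuleRight.inner_smul_left_complex,
      CStarModuleRight.inner_smul_right_complex]
    rfl


theorem _root_.IsAdjointOf.sub {f₁ f₂ g₁ g₂ : H →L[ℂ] H} (h₁ : IsAdjointOf (A := A) f₁ g₁)
    (h₂ : IsAdjointOf (A := A) f₂ g₂) : IsAdjointOf (A := A) (f₁ - f₂) (g₁ - g₂) := fun x y => by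
  simp only [ContinuousLinearMap.sub_apply, CStarModuleRight.inner_sub_left,
    CStarModuleRight.inner_sub_right, h₁ x y, h₂ x y]

theorem isClosed_adjointables :
    IsClosed ((adjointables A H : Set (H →L[ℂ] H))) := by
  refine IsSeqClosed.isClosed fun u f hu hf => ?_
  choose g hg using hu
  have hcau : CauchySeq g := by
    have hcu : CauchySeq u := hf.cauchySeq
    rw [Metric.cauchySeq_iff] at hcu ⊢
    intro ε hε
    obtain ⟨N, hN⟩ := hcu ε hε
    refine ⟨N, fun m hm n hn => ?_⟩
    have hsub : IsAdjointOf (A := A) (u m - u n) (g m - g n) := (hg m).sub (hg n)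
    calc dist (g m) (g n) = ‖g m - g n‖ := dist_eq_norm _ _
      _ ≤ ‖u m - u n‖ := hsub.norm_le
      _ = dist (u m) (u n) := (dist_eq_norm _ _).symm
      _ < ε := hN m hm n hn
  obtain ⟨g', hg'⟩ := cauchySeq_tendsto_of_complete hcau
  refine ⟨g', fun x y => ?_⟩
  have hc1 : Continuous fun T : H →L[ℂ] H => (inner A (T x) y : A) :=
    CStarModuleRight.continuous_inner.comp
      (((ContinuousLinearMap.apply ℂ H x).continuous).prodMk continuous_const)
  have hc2 : Continuous fun T : H →L[ℂ] H => (inner A x (T y) : A) :=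
    CStarModuleRight.continuous_inner.comp
      (continuous_const.prodMk ((ContinuousLinearMap.apply ℂ H y).continuous))
  have h1 : Filter.Tendsto (fun n => (inner A (u n x) y : A)) Filter.atTop
      (nhds (inner A (f x) y)) := (hc1.tendsto f).comp hf
  have h2 : Filter.Tendsto (fun n => (inner A x (g n y) : A)) Filter.atTop
      (nhds (inner A x (g' y))) := (hc2.tendsto g').comp hg'
  have heq : (fun n => (inner A (u n x) y : A)) = fun n => (inner A x (g n y) : A) :=
    funext fun n => hg n x y
  rw [heq] at h1
  exact tendsto_nhds_unique h1 h2


theorem mem_adjointables_iff {f : H →L[ℂ] H} :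
    f ∈ adjointables A H ↔ ∃ g, IsAdjointOf (A := A) f g := Iff.rfl

noncomputable instance instStarAdj : Star (adjointables A H) :=
  ⟨fun f => ⟨f.2.choose, f.1, f.2.choose_spec.symm⟩⟩

theorem star_isAdjointOf (f : adjointables A H) :
    IsAdjointOf (A := A) f.1 (star f).1 := f.2.choose_spec

theorem star_coe_eq {f : adjointables A H} {g : H →L[ℂ] H}
    (h : IsAdjointOf (A := A) f.1 g) : ((star f : adjointables A H) : H →L[ℂ] H) = g :=
  (star_isAdjointOf f).unique h

noncomputable instance instStarRingAdj : StarRing (adjointables A H) where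
  star_involutive f := Subtype.ext <| star_coe_eq (star_isAdjointOf f).symm
  star_mul f g := Subtype.ext <| star_coe_eq <| fun x y => by
    simp only [Subalgebra.coe_mul, ContinuousLinearMap.mul_apply,
      star_isAdjointOf f _ _, star_isAdjointOf g _ _]
  star_add f g := Subtype.ext <| star_coe_eq <| fun x y => by
    simp only [Subalgebra.coe_add, ContinuousLinearMap.add_apply,
      CStarModuleRight.inner_add_left, CStarModuleRight.inner_add_right,
      star_isAdjointOf f x y, star_isAdjointOf g x y]

noncomputable instance instStarModuleAdj : StarModule ℂ (adjointables A H) where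
  star_smul c f := Subtype.ext <| star_coe_eq <| fun x y => by
    simp only [SetLike.val_smul, ContinuousLinearMap.smul_apply,
      CStarModuleRight.inner_smul_left_complex, CStarModuleRight.inner_smul_right_complex,
      star_isAdjointOf f x y]

theorem norm_coe (f : adjointables A H) : ‖f‖ = ‖(f : H →L[ℂ] H)‖ := rfl

noncomputable instance instCStarRingAdj : CStarRing (adjointables A H) where
  norm_mul_self_le f := by
    have key : ∀ x : H, ‖(f : H →L[ℂ] H) x‖ ≤ Real.sqrt ‖star f * f‖ * ‖x‖ := by
      intro x
      have h1 : ‖(f : H →L[ℂ] H) x‖ ^ 2 ≤ ‖star f * f‖ * ‖x‖ ^ 2 := by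
        calc ‖(f : H →L[ℂ] H) x‖ ^ 2
            = ‖(inner A ((f : H →L[ℂ] H) x) ((f : H →L[ℂ] H) x) : A)‖ :=
              CStarModuleRight.norm_sq_eq
          _ = ‖(inner A x (((star f * f : adjointables A H) : H →L[ℂ] H) x) : A)‖ := by
              congr 1
              rw [star_isAdjointOf f x _]
              rfl
          _ ≤ ‖x‖ * ‖((star f * f : adjointables A H) : H →L[ℂ] H) x‖ :=
              CStarModuleRight.norm_inner_le H
          _ ≤ ‖x‖ * (‖star f * f‖ * ‖x‖) := by
              have h3 := ContinuousLinearMap.le_opNorm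
                ((star f * f : adjointables A H) : H →L[ℂ] H) x
              rw [← norm_coe] at h3
              nlinarith [norm_nonneg x]
          _ = ‖star f * f‖ * ‖x‖ ^ 2 := by ring
      have h2 : (0:ℝ) ≤ Real.sqrt ‖star f * f‖ * ‖x‖ := by positivity
      nlinarith [Real.sq_sqrt (norm_nonneg (star f * f)), norm_nonneg ((f : H →L[ℂ] H) x),
        Real.sqrt_nonneg ‖star f * f‖, norm_nonneg x]
    have hop : ‖(f : H →L[ℂ] H)‖ ≤ Real.sqrt ‖star f * f‖ :=
      ContinuousLinearMap.opNorm_le_bound _ (Real.sqrt_nonneg _) key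
    calc ‖f‖ * ‖f‖ ≤ Real.sqrt ‖star f * f‖ * Real.sqrt ‖star f * f‖ := by
          rw [norm_coe]; exact mul_le_mul hop hop (norm_nonneg _) (Real.sqrt_nonneg _)
      _ = ‖star f * f‖ := Real.mul_self_sqrt (norm_nonneg _)

noncomputable instance instCompleteAdj : CompleteSpace (adjointables A H) :=
  (isClosed_adjointables (A := A) (H := H)).completeSpace_coe

noncomputable instance instCStarAlgAdj : CStarAlgebra (adjointables A H) :=
  { (inferInstance : NormedRing (adjointables A H)),
    (inferInstance : StarRing (adjointables A H)),
    (inferInstance : CStarRing (adjointables A H)),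
    (inferInstance : NormedAlgebra ℂ (adjointables A H)),
    (inferInstance : StarModule ℂ (adjointables A H)),
    (inferInstance : CompleteSpace (adjointables A H)) with }


section Nontrivial

variable [Nontrivial H]

instance instNormOneAdj : NormOneClass (adjointables A H) where
  norm_one := by
    rw [norm_coe]
    exact ContinuousLinearMap.norm_id

/-- The key lemma: `⟨Tx, Tx⟩ ≤ ‖T‖² ⟨x, x⟩` for adjointable `T`. -/
theorem inner_le (f : adjointables A H) (x : H) :
    (inner A ((f : H →L[ℂ] H) x) ((f : H →L[ℂ] H) x) : A) ≤
      ‖(f : H →L[ℂ] H)‖ ^ 2 • inner A x x := by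
  set t : ℝ := ‖f‖ ^ 2 with ht
  set c : adjointables A H := algebraMap ℝ _ t - star f * f with hc
  have hc_sa : IsSelfAdjoint c :=
    ((IsSelfAdjoint.all t).algebraMap _).sub (IsSelfAdjoint.star_mul_self f)
  have hspec : ∀ μ ∈ spectrum ℝ c, 0 ≤ μ := by
    intro μ hμ
    rw [hc, ← spectrum.singleton_sub_eq] at hμ
    obtain ⟨s, hs, ν, hν, rfl⟩ := Set.mem_sub.mp hμ
    rw [Set.mem_singleton_iff] at hs
    subst hs
    have h1 : 0 ≤ ν := spectrum_star_mul_self_nonneg ν hν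
    have h2 : ν ≤ ‖star f * f‖ := by
      have := spectrum.norm_le_norm_of_mem hν
      rwa [Real.norm_eq_abs, abs_of_nonneg h1] at this
    have h3 : ‖star f * f‖ = t := by
      rw [CStarRing.norm_star_mul_self, ht, sq]
    linarith
  set b : adjointables A H := cfc Real.sqrt c with hb
  have hb_sa : IsSelfAdjoint b := cfc_predicate Real.sqrt c
  have hb_mul : b * b = c := by
    rw [hb, ← cfc_mul Real.sqrt Real.sqrt c]
    exact (cfc_congr fun μ hμ => Real.mul_self_sqrt (hspec μ hμ)).trans (cfc_id ℝ c)
  have hbadj : IsAdjointOf (A := A) (b : H →L[ℂ] H) (b : H →L[ℂ] H) := by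
    have := star_isAdjointOf b
    rwa [hb_sa.star_eq] at this
  have h0 : (0 : A) ≤ inner A x (((b * b : adjointables A H) : H →L[ℂ] H) x) := by
    have : (inner A x (((b * b : adjointables A H) : H →L[ℂ] H) x) : A) =
        inner A ((b : H →L[ℂ] H) x) ((b : H →L[ℂ] H) x) := by
      rw [hbadj x ((b : H →L[ℂ] H) x)]
      rfl
    rw [this]
    exact CStarModuleRight.inner_self_nonneg
  rw [hb_mul, hc] at h0
  have hcoe : ((algebraMap ℝ (adjointables A H) t - star f * f :
      adjointables A H) : H →L[ℂ] H) = algebraMap ℝ (H →L[ℂ] H) t - (star f * f : adjointables A H) := by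
    rfl
  rw [hcoe] at h0
  have hsplit : (inner A x ((algebraMap ℝ (H →L[ℂ] H) t -
      ((star f * f : adjointables A H) : H →L[ℂ] H)) x) : A) =
      t • inner A x x - inner A ((f : H →L[ℂ] H) x) ((f : H →L[ℂ] H) x) := by
    rw [ContinuousLinearMap.sub_apply, CStarModuleRight.inner_sub_right]
    congr 1
    · have : (algebraMap ℝ (H →L[ℂ] H) t) x = (t : ℂ) • x := by
        rw [IsScalarTower.algebraMap_apply ℝ ℂ (H →L[ℂ] H),
          Algebra.algebraMap_eq_smul_one]
        rfl
      rw [this, CStarModuleRight.inner_smul_right_complex]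
      exact Complex.coe_smul t (inner A x x : A)
    · exact (star_isAdjointOf f x ((f : H →L[ℂ] H) x)).symm
  rw [hsplit, sub_nonneg] at h0
  rw [norm_coe] at ht
  rwa [← ht]

/-- A selfadjoint adjointable operator bounded below is invertible (in the adjointables). -/
theorem isUnit_of_bddBelow (r : adjointables A H) (hsa : IsSelfAdjoint r) {d : ℝ}
    (hd : 0 < d) (hlb : ∀ z : H, d * ‖z‖ ≤ ‖(r : H →L[ℂ] H) z‖) : IsUnit r := by
  by_contra hr
  have h0 : (0 : ℝ) ∈ spectrum ℝ r := (spectrum.zero_mem_iff (R := ℝ)).mpr hr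
  obtain ⟨n, hn⟩ := exists_nat_gt (2 / d)
  have hn0 : (0 : ℝ) < n := lt_of_le_of_lt (by positivity) hn
  set f : ℝ → ℝ := fun x => max (1 - n * |x|) 0 with hf
  have hfc : Continuous f := by
    apply Continuous.max
    · exact continuous_const.sub (continuous_const.mul continuous_abs)
    · exact continuous_const
  set e : adjointables A H := cfc f r with he
  have he1 : (1 : ℝ) ≤ ‖e‖ := by
    have := norm_apply_le_norm_cfc f r h0 hfc.continuousOn hsa
    simpa [hf] using this
  have hre : ‖r * e‖ ≤ 1 / n := by
    have hmul : r * e = cfc (fun x => x * f x) r := by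
      conv_lhs => rw [← cfc_id ℝ r hsa, he]
      exact (cfc_mul id f r (continuousOn_id) hfc.continuousOn).symm
    rw [hmul]
    refine norm_cfc_le (by positivity) fun μ hμ => ?_
    rcases le_or_gt (|μ|) (1 / n) with hc | hc
    · have hf1 : f μ ≤ 1 := max_le (by nlinarith [abs_nonneg μ]) (by norm_num)
      have hf0 : 0 ≤ f μ := le_max_right _ _
      rw [Real.norm_eq_abs, abs_mul, abs_of_nonneg hf0]
      calc |μ| * f μ ≤ |μ| * 1 := by nlinarith [abs_nonneg μ]
        _ ≤ 1 / n := by simpa using hc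
    · have : f μ = 0 := by
        apply max_eq_right
        have : 1 < n * |μ| := by
          have := (div_lt_iff₀ hn0).mp hc
          nlinarith
        linarith
      simp [this]
  -- find a vector where e is large
  have hhalf : ¬ ∀ z : H, ‖(e : H →L[ℂ] H) z‖ ≤ (1 / 2) * ‖z‖ := by
    intro hall
    have : ‖(e : H →L[ℂ] H)‖ ≤ 1 / 2 :=
      ContinuousLinearMap.opNorm_le_bound _ (by norm_num) hall
    rw [← norm_coe] at this
    linarith
  push_neg at hhalf
  obtain ⟨z, hz⟩ := hhalf
  have hz0 : 0 < ‖(e : H →L[ℂ] H) z‖ := lt_of_le_of_lt (by positivity) hz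
  have hchain : d * ‖(e : H →L[ℂ] H) z‖ ≤ (2 / n) * ‖(e : H →L[ℂ] H) z‖ := by
    calc d * ‖(e : H →L[ℂ] H) z‖ ≤ ‖(r : H →L[ℂ] H) ((e : H →L[ℂ] H) z)‖ := hlb _
      _ = ‖((r * e : adjointables A H) : H →L[ℂ] H) z‖ := rfl
      _ ≤ ‖((r * e : adjointables A H) : H →L[ℂ] H)‖ * ‖z‖ :=
          ContinuousLinearMap.le_opNorm _ _
      _ ≤ (1 / n) * ‖z‖ := by
          rw [← norm_coe]
          have : (0:ℝ) ≤ ‖z‖ := norm_nonneg z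
          nlinarith
      _ ≤ (1 / n) * (2 * ‖(e : H →L[ℂ] H) z‖) := by
          have : ‖z‖ ≤ 2 * ‖(e : H →L[ℂ] H) z‖ := by nlinarith
          nlinarith [one_div_pos.mpr hn0]
      _ = (2 / n) * ‖(e : H →L[ℂ] H) z‖ := by ring
  have hd2 : d ≤ 2 / n := le_of_mul_le_mul_right (by nlinarith) hz0
  have h2nd : 2 < n * d := by
    have := (div_lt_iff₀ hd).mp hn
    nlinarith
  have h2nd' : d * n ≤ 2 := by
    have := (le_div_iff₀ hn0).mp hd2
    nlinarith
  nlinarith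

end Nontrivial

end Stmt8Aux

/-- if `{T_i}` is a `(C,C')`-controlled `K`-operator frame with bounds
`A, B` and `Q` is invertible with `Q⁻¹` commuting with `K*` and `Q` commuting with
`C, C'`, then `{T_i Q}` is a `(C,C')`-controlled `K`-operator frame with bounds
`A‖Q⁻¹‖⁻²` and `B‖Q‖²`. -/
theorem stmt_8 {ι : Type*} (C C' K Ks Q Qi : H →L[ℂ] H) (T : ι → H →L[ℂ] H)
    (hC : MemGLPlus (A := A) C) (hC' : MemGLPlus (A := A) C')
    (hK : IsAdjointOf (A := A) K Ks)
    (hQinv : Q.comp Qi = ContinuousLinearMap.id ℂ H ∧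
      Qi.comp Q = ContinuousLinearMap.id ℂ H)
    (hQadj : ∃ Qs : H →L[ℂ] H, IsAdjointOf (A := A) Q Qs)
    (hQiKs : Qi.comp Ks = Ks.comp Qi)
    (hQC : Q.comp C = C.comp Q) (hQC' : Q.comp C' = C'.comp Q)
    (a b : ℝ) (ha : 0 < a) (hb : 0 < b)
    (hframe : ∀ x : H,
      a • (inner A (Ks x) (Ks x) : A) ≤ ∑' i, (inner A (T i (C x)) (T i (C' x)) : A) ∧
      ∑' i, (inner A (T i (C x)) (T i (C' x)) : A) ≤ b • inner A x x) :
    ∀ x : H,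
      (a / ‖Qi‖ ^ 2) • (inner A (Ks x) (Ks x) : A) ≤
        ∑' i, (inner A (T i (Q (C x))) (T i (Q (C' x))) : A) ∧
      ∑' i, (inner A (T i (Q (C x))) (T i (Q (C' x))) : A) ≤
        (b * ‖Q‖ ^ 2) • inner A x x := by
  rcases subsingleton_or_nontrivial H with hH | hH
  · intro x
    have h₁ : ∀ u v : H, (inner A u v : A) = 0 := fun u v => by
      rw [Subsingleton.elim u (0 : H), CStarModuleRight.inner_zero_left]
    constructor <;> simp [h₁]
  · intro x
    obtain ⟨z, hz⟩ := exists_ne (0 : H)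
    have hQQi_pt : ∀ u : H, Q (Qi u) = u := fun u => by
      have := congrArg (fun S : H →L[ℂ] H => S u) hQinv.1
      simpa using this
    have hQiQ_pt : ∀ u : H, Qi (Q u) = u := fun u => by
      have := congrArg (fun S : H →L[ℂ] H => S u) hQinv.2
      simpa using this
    have hQipos : 0 < ‖Qi‖ := by
      by_contra hQi
      push_neg at hQi
      have h0 : ‖Qi‖ = 0 := le_antisymm hQi (norm_nonneg _)
      have h2 : ‖z‖ ≤ ‖Qi‖ * ‖Q z‖ := by
        calc ‖z‖ = ‖Qi (Q z)‖ := by rw [hQiQ_pt z]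
          _ ≤ ‖Qi‖ * ‖Q z‖ := Qi.le_opNorm _
      rw [h0, zero_mul] at h2
      exact hz (norm_le_zero_iff.mp h2)
    set q : Stmt8Aux.adjointables A H := ⟨Q, hQadj⟩ with hq
    have hQs := Stmt8Aux.star_isAdjointOf q
    have hQslb : ∀ y : H, ‖y‖ ≤ ‖Qi‖ * ‖((star q : Stmt8Aux.adjointables A H) : H →L[ℂ] H) y‖ := by
      intro y
      set X := ((star q : Stmt8Aux.adjointables A H) : H →L[ℂ] H) y with hX
      rcases eq_or_lt_of_le (norm_nonneg y) with h0 | h0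
      · rw [← h0]; positivity
      · have key : ‖y‖ * ‖y‖ ≤ (‖Qi‖ * ‖X‖) * ‖y‖ := by
          calc ‖y‖ * ‖y‖ = ‖(inner A y y : A)‖ := by rw [← CStarModuleRight.norm_sq_eq]; ring
            _ = ‖(inner A (Qi y) X : A)‖ := by
                have hyy : (inner A y y : A) = inner A (Qi y) X := by
                  rw [hX, ← hQs (Qi y) y]
                  congr 1
                  exact (hQQi_pt y).symm
                rw [hyy]
            _ ≤ ‖Qi y‖ * ‖X‖ := CStarModuleRight.norm_inner_le H
            _ ≤ (‖Qi‖ * ‖y‖) * ‖X‖ := by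
                have := Qi.le_opNorm y
                nlinarith [norm_nonneg X]
            _ = (‖Qi‖ * ‖X‖) * ‖y‖ := by ring
        exact le_of_mul_le_mul_right key h0
    have hrlb : ∀ u : H, (‖Qi‖⁻¹ * ‖Qi‖⁻¹) * ‖u‖ ≤
        ‖((star q * q : Stmt8Aux.adjointables A H) : H →L[ℂ] H) u‖ := by
      intro u
      set X := ((star q * q : Stmt8Aux.adjointables A H) : H →L[ℂ] H) u with hX
      have h1 : ‖Q u‖ ≤ ‖Qi‖ * ‖X‖ := hQslb (Q u)
      have h2 : ‖u‖ ≤ ‖Qi‖ * ‖Q u‖ := by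
        calc ‖u‖ = ‖Qi (Q u)‖ := by rw [hQiQ_pt u]
          _ ≤ ‖Qi‖ * ‖Q u‖ := Qi.le_opNorm _
      have h3 : ‖u‖ ≤ ‖Qi‖ * (‖Qi‖ * ‖X‖) := by nlinarith
      have h4 : (‖Qi‖⁻¹ * ‖Qi‖⁻¹) * (‖Qi‖ * (‖Qi‖ * ‖X‖)) = ‖X‖ := by
        field_simp
      calc (‖Qi‖⁻¹ * ‖Qi‖⁻¹) * ‖u‖ ≤ (‖Qi‖⁻¹ * ‖Qi‖⁻¹) * (‖Qi‖ * (‖Qi‖ * ‖X‖)) := by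
            apply mul_le_mul_of_nonneg_left h3 (by positivity)
        _ = ‖X‖ := h4
    have hu : IsUnit (star q * q) :=
      Stmt8Aux.isUnit_of_bddBelow _ (IsSelfAdjoint.star_mul_self q) (by positivity) hrlb
    set w : Stmt8Aux.adjointables A H := ↑hu.unit⁻¹ * star q with hw
    have hws : w * q = 1 := by
      rw [hw, mul_assoc]
      exact hu.val_inv_mul
    have hQiw : Qi = (w : H →L[ℂ] H) := by
      have h1 : (w : H →L[ℂ] H).comp Q = ContinuousLinearMap.id ℂ H := by
        have h2 := congrArg (Subtype.val) hws
        exact h2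
      calc Qi = ((w : H →L[ℂ] H).comp Q).comp Qi := by
            rw [h1, ContinuousLinearMap.id_comp]
        _ = (w : H →L[ℂ] H).comp (Q.comp Qi) := by rw [ContinuousLinearMap.comp_assoc]
        _ = (w : H →L[ℂ] H) := by rw [hQinv.1, ContinuousLinearMap.comp_id]
    have hkeyQ : ∀ u : H, (inner A (Q u) (Q u) : A) ≤ ‖Q‖ ^ 2 • inner A u u := fun u =>
      Stmt8Aux.inner_le q u
    have hkeyQi : ∀ u : H, (inner A (Qi u) (Qi u) : A) ≤ ‖Qi‖ ^ 2 • inner A u u := fun u => by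
      rw [hQiw]
      exact Stmt8Aux.inner_le w u
    have hQC_pt : ∀ u : H, Q (C u) = C (Q u) := fun u => by
      have := congrArg (fun S : H →L[ℂ] H => S u) hQC
      simpa using this
    have hQC'_pt : ∀ u : H, Q (C' u) = C' (Q u) := fun u => by
      have := congrArg (fun S : H →L[ℂ] H => S u) hQC'
      simpa using this
    have hQiKs_pt : ∀ u : H, Qi (Ks u) = Ks (Qi u) := fun u => by
      have := congrArg (fun S : H →L[ℂ] H => S u) hQiKs
      simpa using this
    have hKsx : Ks x = Qi (Ks (Q x)) := by
      rw [hQiKs_pt (Q x), hQiQ_pt x]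
    obtain ⟨hlow, hup⟩ := hframe (Q x)
    have hsum : ∑' i, (inner A (T i (Q (C x))) (T i (Q (C' x))) : A) =
        ∑' i, (inner A (T i (C (Q x))) (T i (C' (Q x))) : A) :=
      tsum_congr fun i => by rw [hQC_pt x, hQC'_pt x]
    constructor
    · rw [hsum]
      calc (a / ‖Qi‖ ^ 2) • (inner A (Ks x) (Ks x) : A)
          ≤ (a / ‖Qi‖ ^ 2) • (‖Qi‖ ^ 2 • (inner A (Ks (Q x)) (Ks (Q x)) : A)) := by
            apply smul_le_smul_of_nonneg_left ?_ (by positivity)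
            rw [hKsx]
            exact hkeyQi _
        _ = a • (inner A (Ks (Q x)) (Ks (Q x)) : A) := by
            rw [smul_smul, div_mul_cancel₀ a (by positivity : (‖Qi‖ ^ 2 : ℝ) ≠ 0)]
        _ ≤ _ := hlow
    · rw [hsum]
      calc ∑' i, (inner A (T i (C (Q x))) (T i (C' (Q x))) : A)
          ≤ b • (inner A (Q x) (Q x) : A) := hup
        _ ≤ b • (‖Q‖ ^ 2 • (inner A x x : A)) := smul_le_smul_of_nonneg_left (hkeyQ x) hb.le
        _ = (b * ‖Q‖ ^ 2) • (inner A x x : A) := smul_smul b _ _
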